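/- Let p : {-1,1}^n → ℝ be a polynomial. Then there is a univariate polynomial q : ℝ → ℝ of degree at most deg(p) such that for every t ∈ {0,1,...,n}, q(t) = C(n,t)^{-1} · ∑_{x : |x|=t} p(x), where |x| denotes the number of coordinates of x equal to -1. -/

import Mathlib

/-- The map sending a Boolean to the corresponding element of `{-1,1} ⊆ ℝ`
(`true ↦ -1`, `false ↦ 1`, with `-1` representing logical TRUE). -/
def pm (b : Bool) : ℝ := if b then -1 else 1

/-- The Hamming weight of `x ∈ {-1,1}^n`: the number of coordinates equal to `-1`
(i.e. the number of `true` coordinates in the Boolean encoding). -/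
def hammingWeight {n : ℕ} (x : Fin n → Bool) : ℕ :=
  (Finset.univ.filter fun i => x i = true).card

open Finset Polynomial

/-- Auxiliary univariate polynomial: the symmetrization of a degree-`k` multilinear
monomial over the `n`-cube. -/
noncomputable def qAux (n k : ℕ) : Polynomial ℝ :=
  ∑ j ∈ Finset.range (k + 1),
    Polynomial.C ((k.choose j : ℝ) * (-2) ^ j * ((n.descFactorial j : ℝ))⁻¹) *
      descPochhammer ℝ j

lemma qAux_natDegree_le (n k : ℕ) : (qAux n k).natDegree ≤ k := by
  apply Polynomial.natDegree_sum_le_of_forall_le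
  intro j hj
  calc (Polynomial.C ((k.choose j : ℝ) * (-2) ^ j * ((n.descFactorial j : ℝ))⁻¹) *
          descPochhammer ℝ j).natDegree
      ≤ (descPochhammer ℝ j).natDegree := Polynomial.natDegree_C_mul_le _ _
    _ = j := descPochhammer_natDegree ℝ j
    _ ≤ k := by
        have := Finset.mem_range.mp hj; omega

lemma pm_pow (b : Bool) (e : ℕ) : pm b ^ e = if Odd e then pm b else 1 := by
  rcases Nat.even_or_odd e with h | h
  · rw [if_neg (by simpa using h)]
    cases b <;> simp [pm, h.neg_one_pow]
  · rw [if_pos h]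
    cases b <;> simp [pm, h.neg_one_pow]

lemma nat_identity {n t j : ℕ} (hj : j ≤ t) (ht : t ≤ n) :
    (n - j).choose (t - j) * n.descFactorial j = n.choose t * t.descFactorial j := by
  rw [Nat.descFactorial_eq_factorial_mul_choose, Nat.descFactorial_eq_factorial_mul_choose]
  calc (n - j).choose (t - j) * (Nat.factorial j * n.choose j)
      = Nat.factorial j * (n.choose j * (n - j).choose (t - j)) := by ring
    _ = Nat.factorial j * (n.choose t * t.choose j) := by rw [← Nat.choose_mul (n := n) hj]
    _ = n.choose t * (Nat.factorial j * t.choose j) := by ring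

/-- Counting layer points whose true-set contains a fixed set `A`. -/
lemma count_layer {n : ℕ} (t : ℕ) (A : Finset (Fin n)) (hA : A.card ≤ t) :
    (Finset.univ.filter fun x : Fin n → Bool =>
        hammingWeight x = t ∧ ∀ i ∈ A, x i = true).card
      = (n - A.card).choose (t - A.card) := by
  classical
  have hcard : ((Finset.univ \ A).powersetCard (t - A.card)).card
      = (n - A.card).choose (t - A.card) := by
    rw [Finset.card_powersetCard, Finset.card_sdiff_of_subset (Finset.subset_univ A),
      Finset.card_univ, Fintype.card_fin]
  rw [← hcard]
  refine Finset.card_nbij'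
    (fun x => (Finset.univ.filter fun i => x i = true) \ A)
    (fun B => fun i => decide (i ∈ B ∪ A)) ?_ ?_ ?_ ?_
  · intro x hx
    simp only [Finset.mem_coe, Finset.mem_filter, Finset.mem_univ, true_and] at hx
    obtain ⟨hwt, hsub⟩ := hx
    have hAX : A ⊆ Finset.univ.filter fun i => x i = true := by
      intro i hi; simp [hsub i hi]
    rw [Finset.mem_coe, Finset.mem_powersetCard]
    constructor
    · exact Finset.sdiff_subset_sdiff (Finset.subset_univ _) le_rfl
    · rw [Finset.card_sdiff_of_subset hAX]
      unfold hammingWeight at hwt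
      rw [hwt]
  · intro B hB
    rw [Finset.mem_coe, Finset.mem_powersetCard] at hB
    obtain ⟨hBsub, hBcard⟩ := hB
    have hBA : ∀ i ∈ B, i ∉ A := fun i hi => by
      have := hBsub hi; simp only [Finset.mem_sdiff] at this; exact this.2
    have hdisj : Disjoint B A := Finset.disjoint_left.mpr hBA
    simp only [Finset.mem_coe, Finset.mem_filter, Finset.mem_univ, true_and]
    constructor
    · have hw : hammingWeight (fun i => decide (i ∈ B ∪ A)) = (B ∪ A).card := by
        unfold hammingWeight
        congr 1
        ext i
        simp
      rw [hw, Finset.card_union_of_disjoint hdisj, hBcard]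
      omega
    · intro i hi
      simp [Finset.mem_union, hi]
  · intro x hx
    simp only [Finset.mem_coe, Finset.mem_filter, Finset.mem_univ, true_and] at hx
    obtain ⟨hwt, hsub⟩ := hx
    funext i
    have hAX : A ⊆ Finset.univ.filter fun j => x j = true := by
      intro i hi; simp [hsub i hi]
    show decide (i ∈ (Finset.univ.filter fun j => x j = true) \ A ∪ A) = x i
    rw [Finset.sdiff_union_of_subset hAX]
    simp only [Finset.mem_filter, Finset.mem_univ, true_and]
    by_cases h : x i = true <;> simp [h]
  · intro B hB
    rw [Finset.mem_coe, Finset.mem_powersetCard] at hB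
    obtain ⟨hBsub, hBcard⟩ := hB
    have hBA : ∀ i ∈ B, i ∉ A := fun i hi => by
      have := hBsub hi; simp only [Finset.mem_sdiff] at this; exact this.2
    ext i
    simp only [Finset.mem_sdiff, Finset.mem_filter, Finset.mem_univ, true_and,
      decide_eq_true_eq, Finset.mem_union]
    constructor
    · rintro ⟨h1 | h1, h2⟩
      · exact h1
      · exact absurd h1 h2
    · intro h1
      exact ⟨Or.inl h1, hBA i h1⟩

/-- Empty layer-count when `A` is too big. -/
lemma count_layer_zero {n : ℕ} (t : ℕ) (A : Finset (Fin n)) (hA : t < A.card) :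
    (Finset.univ.filter fun x : Fin n → Bool =>
        hammingWeight x = t ∧ ∀ i ∈ A, x i = true).card = 0 := by
  rw [Finset.card_eq_zero, Finset.filter_eq_empty_iff]
  rintro x - ⟨hwt, hsub⟩
  have hAX : A ⊆ Finset.univ.filter fun i => x i = true := by
    intro i hi; simp [hsub i hi]
  have := Finset.card_le_card hAX
  unfold hammingWeight at hwt
  omega

lemma layer_sum {n : ℕ} (t : ℕ) (ht : t ≤ n) (S : Finset (Fin n)) :
    ∑ x ∈ Finset.univ.filter (fun x : Fin n → Bool => hammingWeight x = t),
        ∏ i ∈ S, pm (x i)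
      = (n.choose t : ℝ) * (qAux n S.card).eval (t : ℝ) := by
  classical
  have hSn : S.card ≤ n := by
    simpa using Finset.card_le_univ S
  -- expand the product over S
  have hexp : ∀ x : Fin n → Bool, ∏ i ∈ S, pm (x i)
      = ∑ A ∈ S.powerset, (-2 : ℝ) ^ A.card * (if ∀ i ∈ A, x i = true then 1 else 0) := by
    intro x
    have h1 : ∀ i, pm (x i)
        = (-2 : ℝ) * (if x i = true then 1 else 0) + 1 := by
      intro i; cases h : x i <;> simp [pm, h] <;> norm_num
    calc ∏ i ∈ S, pm (x i)
        = ∏ i ∈ S, ((-2 : ℝ) * (if x i = true then 1 else 0) + 1) := by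
          exact Finset.prod_congr rfl fun i _ => h1 i
      _ = ∑ A ∈ S.powerset, (∏ i ∈ A, (-2 : ℝ) * (if x i = true then 1 else 0)) *
            ∏ _i ∈ S \ A, (1 : ℝ) := Finset.prod_add _ _ _
      _ = ∑ A ∈ S.powerset, (-2 : ℝ) ^ A.card * (if ∀ i ∈ A, x i = true then 1 else 0) := by
          refine Finset.sum_congr rfl fun A _ => ?_
          rw [Finset.prod_const_one, mul_one, Finset.prod_mul_distrib,
            Finset.prod_const, Finset.prod_boole]
          congr
  -- swap sums and count
  have hsum : ∑ x ∈ Finset.univ.filter (fun x : Fin n → Bool => hammingWeight x = t),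
        ∏ i ∈ S, pm (x i)
      = ∑ A ∈ S.powerset, (-2 : ℝ) ^ A.card *
          (if A.card ≤ t then ((n - A.card).choose (t - A.card) : ℝ) else 0) := by
    rw [Finset.sum_congr rfl fun x _ => hexp x, Finset.sum_comm]
    refine Finset.sum_congr rfl fun A _ => ?_
    rw [← Finset.mul_sum, Finset.sum_boole, Finset.filter_filter]
    by_cases h : A.card ≤ t
    · rw [if_pos h, count_layer t A h]
    · rw [if_neg h, count_layer_zero t A (by omega), Nat.cast_zero]
  rw [hsum]
  -- group by cardinality
  rw [Finset.sum_powerset_apply_card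
    (fun m => (-2 : ℝ) ^ m * (if m ≤ t then ((n - m).choose (t - m) : ℝ) else 0))]
  -- evaluate qAux
  rw [qAux, Polynomial.eval_finset_sum, Finset.mul_sum]
  refine Finset.sum_congr rfl fun j hj => ?_
  have hjS : j ≤ S.card := by have := Finset.mem_range.mp hj; omega
  have hjn : j ≤ n := hjS.trans hSn
  have hd0 : (n.descFactorial j : ℝ) ≠ 0 := by
    have : n.descFactorial j ≠ 0 := fun h => by
      rw [Nat.descFactorial_eq_zero_iff_lt] at h; omega
    exact_mod_cast this
  rw [Polynomial.eval_mul, Polynomial.eval_C, descPochhammer_eval_eq_descFactorial]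
  rw [nsmul_eq_mul]
  by_cases h : j ≤ t
  · rw [if_pos h]
    have hnat : ((n - j).choose (t - j) : ℝ) * (n.descFactorial j : ℝ)
        = (n.choose t : ℝ) * (t.descFactorial j : ℝ) := by
      rw [← Nat.cast_mul, ← Nat.cast_mul, nat_identity h ht]
    have key : ((n - j).choose (t - j) : ℝ)
        = (n.choose t : ℝ) * ((n.descFactorial j : ℝ))⁻¹ * (t.descFactorial j : ℝ) := by
      field_simp
      linear_combination hnat
    rw [key]
    ring
  · rw [if_neg h]
    have : t.descFactorial j = 0 := Nat.descFactorial_eq_zero_iff_lt.mpr (by omega)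
    rw [this]
    simp

lemma prod_pm_pow {n : ℕ} (x : Fin n → Bool) (m : Fin n →₀ ℕ) :
    ∏ i, pm (x i) ^ m i
      = ∏ i ∈ Finset.univ.filter fun i => Odd (m i), pm (x i) := by
  rw [Finset.prod_filter]
  exact Finset.prod_congr rfl fun i _ => (pm_pow _ _)

lemma card_odd_le {n : ℕ} (m : Fin n →₀ ℕ) :
    (Finset.univ.filter fun i : Fin n => Odd (m i)).card ≤ m.sum fun _ e => e := by
  rw [Finsupp.sum]
  calc (Finset.univ.filter fun i : Fin n => Odd (m i)).card
      = ∑ _i ∈ Finset.univ.filter fun i : Fin n => Odd (m i), 1 :=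
        (Finset.card_eq_sum_ones _)
    _ ≤ ∑ i ∈ Finset.univ.filter fun i : Fin n => Odd (m i), m i := by
        refine Finset.sum_le_sum fun i hi => ?_
        have := (Finset.mem_filter.mp hi).2
        have : m i ≠ 0 := by rintro h; rw [h] at this; exact (Nat.not_odd_iff_even.mpr Even.zero) this
        omega
    _ ≤ ∑ i ∈ m.support, m i := by
        refine Finset.sum_le_sum_of_subset ?_
        intro i hi
        have := (Finset.mem_filter.mp hi).2
        rw [Finsupp.mem_support_iff]
        rintro h; rw [h] at this; exact (Nat.not_odd_iff_even.mpr Even.zero) this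

/-- Minsky–Papert symmetrization: for any polynomial `p` on `{-1,1}^n` there is a
univariate polynomial `q` of degree at most `deg p` whose value at each
`t ∈ {0,…,n}` is the average of `p` over the Hamming-weight-`t` layer. -/
theorem minsky_papert_symmetrization (n : ℕ) (p : MvPolynomial (Fin n) ℝ) :
    ∃ q : Polynomial ℝ, q.natDegree ≤ p.totalDegree ∧
      ∀ t : ℕ, t ≤ n →
        q.eval (t : ℝ) = ((n.choose t : ℝ))⁻¹ *
          ∑ x ∈ Finset.univ.filter (fun x : Fin n → Bool => hammingWeight x = t),
            MvPolynomial.eval (fun i => pm (x i)) p := by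
  classical
  refine ⟨∑ m ∈ p.support, Polynomial.C (MvPolynomial.coeff m p) *
      qAux n (Finset.univ.filter fun i => Odd (m i)).card, ?_, ?_⟩
  · apply Polynomial.natDegree_sum_le_of_forall_le
    intro m hm
    refine (Polynomial.natDegree_C_mul_le _ _).trans ((qAux_natDegree_le _ _).trans ?_)
    exact (card_odd_le m).trans (MvPolynomial.le_totalDegree hm)
  · intro t ht
    have hC : (n.choose t : ℝ) ≠ 0 := by
      have : 0 < n.choose t := Nat.choose_pos ht
      positivity
    rw [Polynomial.eval_finset_sum]
    have hterm : ∀ m ∈ p.support,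
        (Polynomial.C (MvPolynomial.coeff m p) *
          qAux n (Finset.univ.filter fun i => Odd (m i)).card).eval (t : ℝ)
        = (MvPolynomial.coeff m p) * ((n.choose t : ℝ))⁻¹ *
            ∑ x ∈ Finset.univ.filter (fun x : Fin n → Bool => hammingWeight x = t),
              ∏ i ∈ Finset.univ.filter fun i => Odd (m i), pm (x i) := by
      intro m _
      rw [Polynomial.eval_mul, Polynomial.eval_C]
      rw [show (qAux n (Finset.univ.filter fun i => Odd (m i)).card).eval (t : ℝ)
          = ((n.choose t : ℝ))⁻¹ *
            ∑ x ∈ Finset.univ.filter (fun x : Fin n → Bool => hammingWeight x = t),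
              ∏ i ∈ Finset.univ.filter fun i => Odd (m i), pm (x i) from ?_]
      · ring
      · rw [layer_sum t ht, inv_mul_cancel_left₀ hC]
    have hrhs : ∑ x ∈ Finset.univ.filter (fun x : Fin n → Bool => hammingWeight x = t),
          MvPolynomial.eval (fun i => pm (x i)) p
        = ∑ m ∈ p.support, MvPolynomial.coeff m p *
            ∑ x ∈ Finset.univ.filter (fun x : Fin n → Bool => hammingWeight x = t),
              ∏ i ∈ Finset.univ.filter fun i => Odd (m i), pm (x i) := by
      rw [Finset.sum_congr rfl (fun x _ => MvPolynomial.eval_eq' (fun i => pm (x i)) p),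
        Finset.sum_comm]
      refine Finset.sum_congr rfl fun m _ => ?_
      rw [Finset.mul_sum]
      exact Finset.sum_congr rfl fun x _ => by rw [prod_pm_pow x m]
    rw [Finset.sum_congr rfl hterm, hrhs, Finset.mul_sum]
    exact Finset.sum_congr rfl fun m _ => by ring
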